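/- Let T₁, T₂ be countable sets, R₁ ⊆ T₁ × T₁ and R₂ ⊆ T₂ × T₂ relations, ε₁, ε₂ ∈ [0,1], and π₁, π₁' distributions on T₁, π₂, π₂' distributions on T₂. Suppose π₁(X) ≤ π₁'(R₁(X)) + ε₁ for all X ⊆ T₁, and π₂(Y) ≤ π₂'(R₂(Y)) + ε₂ for all Y ⊆ T₂. Then the product distributions satisfy (π₁ × π₂)(Z) ≤ (π₁' × π₂')((R₁ × R₂)(Z)) + (1 - (1-ε₁)(1-ε₂)) for all Z ⊆ T₁ × T₂, where (R₁ × R₂) relates (x₁,x₂) to (y₁,y₂) iff x₁ R₁ y₁ and x₂ R₂ y₂. -/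

import Mathlib

open MeasureTheory Set ENNReal

noncomputable def mass {T : Type*} (π : T → ℝ) (X : Set T) : ℝ := ∑' x : X, π x

def img {T : Type*} (R : T → T → Prop) (X : Set T) : Set T := {y | ∃ x ∈ X, R x y}

noncomputable def emass {T : Type*} (π : T → ℝ) (X : Set T) : ℝ≥0∞ :=
  ∑' x : X, ENNReal.ofReal (π x)

lemma mass_nonneg {T : Type*} {π : T → ℝ} (h : ∀ t, 0 ≤ π t) (X : Set T) :
    0 ≤ mass π X := tsum_nonneg fun x => h x

lemma emass_eq {T : Type*} {π : T → ℝ} (h0 : ∀ t, 0 ≤ π t) (hs : Summable π) (X : Set T) :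
    emass π X = ENNReal.ofReal (mass π X) := by
  rw [mass]
  exact (ENNReal.ofReal_tsum_of_nonneg (fun x : X => h0 x) (hs.subtype X)).symm

lemma emass_mono {T : Type*} (π : T → ℝ) {X Y : Set T} (hXY : X ⊆ Y) :
    emass π X ≤ emass π Y := by
  rw [emass, emass, tsum_subtype X (fun a => ENNReal.ofReal (π a)),
    tsum_subtype Y (fun a => ENNReal.ofReal (π a))]
  exact ENNReal.tsum_le_tsum fun x =>
    Set.indicator_le_indicator_of_subset hXY (fun _ => zero_le) x

lemma mass_mono {T : Type*} {π : T → ℝ} (h0 : ∀ t, 0 ≤ π t) (hs : Summable π)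
    {X Y : Set T} (hXY : X ⊆ Y) : mass π X ≤ mass π Y := by
  have := emass_mono π hXY
  rw [emass_eq h0 hs, emass_eq h0 hs] at this
  exact (ENNReal.ofReal_le_ofReal_iff (mass_nonneg h0 Y)).1 this

lemma mass_le_total {T : Type*} {π : T → ℝ} (h0 : ∀ t, 0 ≤ π t) (hs : Summable π)
    (X : Set T) : mass π X ≤ ∑' t, π t := by
  have : mass π univ = ∑' t, π t := tsum_univ π
  rw [← this]
  exact mass_mono h0 hs (subset_univ X)

lemma emass_prod_slice {T₁ T₂ : Type*} {π₁ : T₁ → ℝ} (h₁ : ∀ t, 0 ≤ π₁ t) (π₂ : T₂ → ℝ)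
    (Z : Set (T₁ × T₂)) :
    emass (fun z => π₁ z.1 * π₂ z.2) Z
      = ∑' x, ENNReal.ofReal (π₁ x) * emass π₂ {x₂ | (x, x₂) ∈ Z} := by
  rw [emass, tsum_subtype Z (fun z => ENNReal.ofReal (π₁ z.1 * π₂ z.2)), ENNReal.tsum_prod']
  refine tsum_congr fun x => ?_
  rw [emass, tsum_subtype {x₂ | (x, x₂) ∈ Z} (fun w => ENNReal.ofReal (π₂ w)),
    ← ENNReal.tsum_mul_left]
  refine tsum_congr fun y => ?_
  by_cases h : (x, y) ∈ Z
  · rw [Set.indicator_of_mem h, Set.indicator_of_mem (show y ∈ {x₂ | (x, x₂) ∈ Z} from h),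
      ENNReal.ofReal_mul (h₁ x)]
  · rw [Set.indicator_of_notMem h,
      Set.indicator_of_notMem (show y ∉ {x₂ | (x, x₂) ∈ Z} from h), mul_zero]

/-- product lemma for the ε-lifting. -/
theorem stmt_12 {T₁ T₂ : Type*} [Countable T₁] [Countable T₂]
    (R₁ : T₁ → T₁ → Prop) (R₂ : T₂ → T₂ → Prop)
    (ε₁ ε₂ : ℝ) (hε₁0 : 0 ≤ ε₁) (hε₁1 : ε₁ ≤ 1) (hε₂0 : 0 ≤ ε₂) (hε₂1 : ε₂ ≤ 1)
    (π₁ π₁' : T₁ → ℝ) (π₂ π₂' : T₂ → ℝ)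
    (hπ₁0 : ∀ t, 0 ≤ π₁ t) (hπ₁1 : ∑' t, π₁ t = 1)
    (hπ₁'0 : ∀ t, 0 ≤ π₁' t) (hπ₁'1 : ∑' t, π₁' t = 1)
    (hπ₂0 : ∀ t, 0 ≤ π₂ t) (hπ₂1 : ∑' t, π₂ t = 1)
    (hπ₂'0 : ∀ t, 0 ≤ π₂' t) (hπ₂'1 : ∑' t, π₂' t = 1)
    (h1 : ∀ X : Set T₁, mass π₁ X ≤ mass π₁' (img R₁ X) + ε₁)
    (h2 : ∀ Y : Set T₂, mass π₂ Y ≤ mass π₂' (img R₂ Y) + ε₂) :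
    ∀ Z : Set (T₁ × T₂),
      mass (fun z => π₁ z.1 * π₂ z.2) Z ≤
        mass (fun z => π₁' z.1 * π₂' z.2)
          (img (fun z w => R₁ z.1 w.1 ∧ R₂ z.2 w.2) Z) +
        (1 - (1 - ε₁) * (1 - ε₂)) := by
  intro Z
  -- summability
  have sπ₁ : Summable π₁ := by
    by_contra h; rw [tsum_eq_zero_of_not_summable h] at hπ₁1; norm_num at hπ₁1
  have sπ₁' : Summable π₁' := by
    by_contra h; rw [tsum_eq_zero_of_not_summable h] at hπ₁'1; norm_num at hπ₁'1
  have sπ₂ : Summable π₂ := by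
    by_contra h; rw [tsum_eq_zero_of_not_summable h] at hπ₂1; norm_num at hπ₂1
  have sπ₂' : Summable π₂' := by
    by_contra h; rw [tsum_eq_zero_of_not_summable h] at hπ₂'1; norm_num at hπ₂'1
  set W : Set (T₁ × T₂) := img (fun z w => R₁ z.1 w.1 ∧ R₂ z.2 w.2) Z with hW
  set f : T₁ → ℝ := fun x => mass π₂ {x₂ | (x, x₂) ∈ Z} with hf
  set g : T₁ → ℝ := fun y => mass π₂' {w | (y, w) ∈ W} with hg
  have hf0 : ∀ x, 0 ≤ f x := fun x => mass_nonneg hπ₂0 _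
  have hf1 : ∀ x, f x ≤ 1 := fun x => hπ₂1 ▸ mass_le_total hπ₂0 sπ₂ _
  have hg0 : ∀ y, 0 ≤ g y := fun y => mass_nonneg hπ₂'0 _
  have hg1 : ∀ y, g y ≤ 1 := fun y => hπ₂'1 ▸ mass_le_total hπ₂'0 sπ₂' _
  -- key pointwise bound
  have hfg : ∀ x y, R₁ x y → f x ≤ g y + ε₂ := by
    intro x y hxy
    refine (h2 _).trans (add_le_add_left ?_ ε₂)
    refine mass_mono hπ₂'0 sπ₂' ?_
    rintro w ⟨x₂, hx₂, hR⟩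
    exact ⟨(x, x₂), hx₂, hxy, hR⟩
  -- measures on T₁
  letI : MeasurableSpace T₁ := ⊤
  haveI : MeasurableSingletonClass T₁ := ⟨fun _ => MeasurableSpace.measurableSet_top⟩
  set μ₁ : Measure T₁ := Measure.sum (fun a => ENNReal.ofReal (π₁ a) • Measure.dirac a) with hμ₁
  set μ₁' : Measure T₁ := Measure.sum (fun a => ENNReal.ofReal (π₁' a) • Measure.dirac a)
    with hμ₁'
  have happ : ∀ (π : T₁ → ℝ) (S : Set T₁),
      Measure.sum (fun a => ENNReal.ofReal (π a) • Measure.dirac a) S = emass π S := by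
    intro π S
    rw [Measure.sum_apply _ MeasurableSpace.measurableSet_top, emass,
      tsum_subtype S (fun a => ENNReal.ofReal (π a))]
    refine tsum_congr fun a => ?_
    rw [Measure.smul_apply, Measure.dirac_apply, smul_eq_mul]
    by_cases h : a ∈ S
    · rw [Set.indicator_of_mem h, Set.indicator_of_mem h, Pi.one_apply, mul_one]
    · rw [Set.indicator_of_notMem h, Set.indicator_of_notMem h, mul_zero]
  have hμ₁app : ∀ S : Set T₁, μ₁ S = emass π₁ S := happ π₁
  have hμ₁'app : ∀ S : Set T₁, μ₁' S = emass π₁' S := happ π₁'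
  have hμ₁univ : μ₁ univ = 1 := by
    rw [hμ₁app, emass_eq hπ₁0 sπ₁, mass, tsum_univ, hπ₁1, ENNReal.ofReal_one]
  have hμ₁'univ : μ₁' univ = 1 := by
    rw [hμ₁'app, emass_eq hπ₁'0 sπ₁', mass, tsum_univ, hπ₁'1, ENNReal.ofReal_one]
  have hsing : ∀ (π : T₁ → ℝ) (a : T₁),
      Measure.sum (fun a => ENNReal.ofReal (π a) • Measure.dirac a) {a}
        = ENNReal.ofReal (π a) := by
    intro π a
    rw [happ, emass, tsum_singleton a (fun b => ENNReal.ofReal (π b))]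
  -- layer cake on both sides
  have lc : ∀ (π : T₁ → ℝ) (h : T₁ → ℝ), (∀ x, 0 ≤ h x) →
      (∑' x, ENNReal.ofReal (π x) * ENNReal.ofReal (h x))
        = ∫⁻ t in Ioi (0:ℝ),
            Measure.sum (fun a => ENNReal.ofReal (π a) • Measure.dirac a) {x | t < h x} := by
    intro π h h0
    rw [← lintegral_eq_lintegral_meas_lt _ (Filter.Eventually.of_forall h0)
      measurable_from_top.aemeasurable, lintegral_countable']
    refine tsum_congr fun a => ?_
    rw [hsing, mul_comm]
  -- LHS as an integral
  have hLHS : emass (fun z => π₁ z.1 * π₂ z.2) Z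
      = ∫⁻ t in Ioi (0:ℝ), μ₁ {x | t < f x} := by
    rw [emass_prod_slice hπ₁0, ← lc π₁ f hf0]
    refine tsum_congr fun x => ?_
    rw [emass_eq hπ₂0 sπ₂]
  -- RHS as an integral
  have hRHS : emass (fun z => π₁' z.1 * π₂' z.2) W
      = ∫⁻ t in Ioi (0:ℝ), μ₁' {y | t < g y} := by
    rw [emass_prod_slice hπ₁'0, ← lc π₁' g hg0]
    refine tsum_congr fun y => ?_
    rw [emass_eq hπ₂'0 sπ₂']
  -- the pointwise measure bound for t ∈ Ioc ε₂ 1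
  have hmeas : ∀ t : ℝ, μ₁ {x | t < f x} ≤ μ₁' {y | t - ε₂ < g y} + ENNReal.ofReal ε₁ := by
    intro t
    have h1' : emass π₁ {x | t < f x} ≤ emass π₁' (img R₁ {x | t < f x}) + ENNReal.ofReal ε₁ := by
      rw [emass_eq hπ₁0 sπ₁, emass_eq hπ₁'0 sπ₁', ← ENNReal.ofReal_add (mass_nonneg hπ₁'0 _) hε₁0]
      exact ENNReal.ofReal_le_ofReal (h1 _)
    have hsub : img R₁ {x | t < f x} ⊆ {y | t - ε₂ < g y} := by
      rintro y ⟨x, hx, hxy⟩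
      have := hfg x y hxy
      simp only [mem_setOf_eq] at hx ⊢
      linarith
    calc μ₁ {x | t < f x} = emass π₁ {x | t < f x} := hμ₁app _
      _ ≤ emass π₁' (img R₁ {x | t < f x}) + ENNReal.ofReal ε₁ := h1'
      _ ≤ emass π₁' {y | t - ε₂ < g y} + ENNReal.ofReal ε₁ :=
          add_le_add_left (emass_mono _ hsub) _
      _ = μ₁' {y | t - ε₂ < g y} + ENNReal.ofReal ε₁ := by rw [hμ₁'app]
  -- now estimate the integral
  have hIoc1 : (∫⁻ t in Ioi (0:ℝ), μ₁ {x | t < f x})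
      = ∫⁻ t in Ioc (0:ℝ) 1, μ₁ {x | t < f x} := by
    rw [← Ioc_union_Ioi_eq_Ioi (zero_le_one (α := ℝ)),
      lintegral_union measurableSet_Ioi (Ioc_disjoint_Ioi le_rfl)]
    have h0 : (∫⁻ t in Ioi (1:ℝ), μ₁ {x | t < f x}) = 0 := by
      rw [setLIntegral_congr_fun measurableSet_Ioi
        (fun ⦃t⦄ (ht : 1 < t) => ?_), lintegral_zero]
      have : {x | t < f x} = ∅ := by
        ext x; simp only [mem_setOf_eq, mem_empty_iff_false, iff_false, not_lt]
        exact (hf1 x).trans ht.le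
      rw [this, measure_empty]
    rw [h0, add_zero]
  have hpiece1 : (∫⁻ t in Ioc (0:ℝ) ε₂, μ₁ {x | t < f x}) ≤ ENNReal.ofReal ε₂ := by
    calc (∫⁻ t in Ioc (0:ℝ) ε₂, μ₁ {x | t < f x})
        ≤ ∫⁻ _ in Ioc (0:ℝ) ε₂, 1 := by
          refine setLIntegral_mono' measurableSet_Ioc fun t _ => ?_
          rw [← hμ₁univ]; exact measure_mono (subset_univ _)
      _ = ENNReal.ofReal ε₂ := by rw [setLIntegral_one, Real.volume_Ioc, sub_zero]
  have hshift : (∫⁻ t in Ioc ε₂ 1, μ₁' {y | t - ε₂ < g y})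
      = ∫⁻ s in Ioc (0:ℝ) (1 - ε₂), μ₁' {y | s < g y} := by
    rw [← lintegral_indicator measurableSet_Ioc, ← lintegral_indicator measurableSet_Ioc]
    rw [← lintegral_sub_right_eq_self
      (f := fun s => (Ioc (0:ℝ) (1 - ε₂)).indicator (fun s => μ₁' {y | s < g y}) s) ε₂]
    refine lintegral_congr fun t => ?_
    by_cases ht : t ∈ Ioc ε₂ 1
    · have ht' : t - ε₂ ∈ Ioc (0:ℝ) (1 - ε₂) := by
        rw [mem_Ioc] at ht ⊢
        constructor <;> linarith [ht.1, ht.2]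
      rw [Set.indicator_of_mem ht, Set.indicator_of_mem ht']
    · have ht' : t - ε₂ ∉ Ioc (0:ℝ) (1 - ε₂) := by
        rw [mem_Ioc] at ht ⊢
        intro hc
        exact ht ⟨by linarith [hc.1], by linarith [hc.2]⟩
      rw [Set.indicator_of_notMem ht, Set.indicator_of_notMem ht']
  have hpiece2 : (∫⁻ t in Ioc ε₂ 1, μ₁ {x | t < f x})
      ≤ (∫⁻ t in Ioi (0:ℝ), μ₁' {y | t < g y}) + ENNReal.ofReal ε₁ * ENNReal.ofReal (1 - ε₂) := by
    calc (∫⁻ t in Ioc ε₂ 1, μ₁ {x | t < f x})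
        ≤ ∫⁻ t in Ioc ε₂ 1, (μ₁' {y | t - ε₂ < g y} + ENNReal.ofReal ε₁) :=
          setLIntegral_mono' measurableSet_Ioc fun t _ => hmeas t
      _ = (∫⁻ t in Ioc ε₂ 1, μ₁' {y | t - ε₂ < g y})
            + ENNReal.ofReal ε₁ * volume (Ioc ε₂ 1) := by
          rw [lintegral_add_right _ measurable_const, setLIntegral_const]
      _ ≤ (∫⁻ t in Ioi (0:ℝ), μ₁' {y | t < g y}) + ENNReal.ofReal ε₁ * ENNReal.ofReal (1 - ε₂) := by
          refine add_le_add ?_ ?_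
          · rw [hshift]; exact lintegral_mono_set Ioc_subset_Ioi_self
          · rw [Real.volume_Ioc]
  have key : (∫⁻ t in Ioi (0:ℝ), μ₁ {x | t < f x})
      ≤ (∫⁻ t in Ioi (0:ℝ), μ₁' {y | t < g y})
        + (ENNReal.ofReal ε₂ + ENNReal.ofReal ε₁ * ENNReal.ofReal (1 - ε₂)) := by
    rw [hIoc1, ← Ioc_union_Ioc_eq_Ioc hε₂0 hε₂1,
      lintegral_union measurableSet_Ioc (Ioc_disjoint_Ioc_of_le le_rfl)]
    calc (∫⁻ t in Ioc (0:ℝ) ε₂, μ₁ {x | t < f x}) + ∫⁻ t in Ioc ε₂ 1, μ₁ {x | t < f x}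
        ≤ ENNReal.ofReal ε₂ + ((∫⁻ t in Ioi (0:ℝ), μ₁' {y | t < g y})
            + ENNReal.ofReal ε₁ * ENNReal.ofReal (1 - ε₂)) := add_le_add hpiece1 hpiece2
      _ = _ := by ring
  -- put everything together
  have sprod : Summable (fun z : T₁ × T₂ => π₁ z.1 * π₂ z.2) :=
    sπ₁.mul_of_nonneg sπ₂ hπ₁0 hπ₂0
  have sprod' : Summable (fun z : T₁ × T₂ => π₁' z.1 * π₂' z.2) :=
    sπ₁'.mul_of_nonneg sπ₂' hπ₁'0 hπ₂'0
  have pn : ∀ z : T₁ × T₂, 0 ≤ π₁ z.1 * π₂ z.2 := fun z => mul_nonneg (hπ₁0 _) (hπ₂0 _)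
  have pn' : ∀ z : T₁ × T₂, 0 ≤ π₁' z.1 * π₂' z.2 := fun z => mul_nonneg (hπ₁'0 _) (hπ₂'0 _)
  have main : ENNReal.ofReal (mass (fun z => π₁ z.1 * π₂ z.2) Z)
      ≤ ENNReal.ofReal (mass (fun z => π₁' z.1 * π₂' z.2) W + (ε₂ + ε₁ * (1 - ε₂))) := by
    calc ENNReal.ofReal (mass (fun z => π₁ z.1 * π₂ z.2) Z)
        = emass (fun z => π₁ z.1 * π₂ z.2) Z := (emass_eq pn sprod Z).symm
      _ = ∫⁻ t in Ioi (0:ℝ), μ₁ {x | t < f x} := hLHS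
      _ ≤ (∫⁻ t in Ioi (0:ℝ), μ₁' {y | t < g y})
            + (ENNReal.ofReal ε₂ + ENNReal.ofReal ε₁ * ENNReal.ofReal (1 - ε₂)) := key
      _ = emass (fun z => π₁' z.1 * π₂' z.2) W
            + (ENNReal.ofReal ε₂ + ENNReal.ofReal ε₁ * ENNReal.ofReal (1 - ε₂)) := by rw [hRHS]
      _ = ENNReal.ofReal (mass (fun z => π₁' z.1 * π₂' z.2) W + (ε₂ + ε₁ * (1 - ε₂))) := by
          rw [emass_eq pn' sprod', ← ENNReal.ofReal_mul hε₁0,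
            ← ENNReal.ofReal_add hε₂0 (mul_nonneg hε₁0 (by linarith)),
            ← ENNReal.ofReal_add (mass_nonneg pn' W) (by nlinarith)]
  have hle : mass (fun z => π₁ z.1 * π₂ z.2) Z
      ≤ mass (fun z => π₁' z.1 * π₂' z.2) W + (ε₂ + ε₁ * (1 - ε₂)) := by
    refine (ENNReal.ofReal_le_ofReal_iff ?_).1 main
    have := mass_nonneg pn' W
    nlinarith
  have : ε₂ + ε₁ * (1 - ε₂) = 1 - (1 - ε₁) * (1 - ε₂) := by ring
  rw [hW] at hle
  linarith
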